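/- Let p be a prime and let g(X) ∈ ℤ_{p²}[X] be monic with irreducible reduction modulo p and coefficients in {0, 1, …, p−1}, and let u₁(X), u₂(X), u₃(X), u₄(X) ∈ ℤ_{p²}[X] have coefficients in {0, 1, …, p−1}, not ≡ 0 (mod p), each of degree strictly less than deg g(X). Set R₁ = ℤ_{p²}[X, Y]/(g(X) − u₃(X)Y, Y² − p·u₁(X), pY) and R₂ = ℤ_{p²}[X, Y]/(g(X) − u₄(X)Y, Y² − p·u₂(X), pY). If there exist polynomials v₁(X), v₂(X) ∈ ℤ_{p²}[X] such that u₂(X) ≡ v₂(X)² · u₁(X) and u₄(X) ≡ v₂(X) · u₃(X) modulo the ideal (p, g(X)²), and u₁(X) ≡ v₁(X)² · u₂(X) and u₃(X) ≡ v₁(X) · u₄(X) modulo the ideal (p, g(X)²), then R₁ is isomorphic to R₂ as a ring. -/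

import Mathlib

set_option maxHeartbeats 2000000
set_option synthInstance.maxHeartbeats 400000

open Polynomial

/-- The ideal `(g(X) − u'(X)·Y, Y² − p·u(X), pY)` of `ℤ_{p²}[X,Y]`, the latter modelled
as `Polynomial (Polynomial (ZMod (p^2)))`, the outer indeterminate being `Y` and the
inner one being `X`. -/
noncomputable def paperIdealI (p : ℕ) (g u' u : Polynomial (ZMod (p ^ 2))) :
    Ideal (Polynomial (Polynomial (ZMod (p ^ 2)))) :=
  Ideal.span
    ({Polynomial.C g - Polynomial.C u' * Polynomial.X,
      Polynomial.X ^ 2 -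
        (p : Polynomial (Polynomial (ZMod (p ^ 2)))) * Polynomial.C u,
      (p : Polynomial (Polynomial (ZMod (p ^ 2)))) * Polynomial.X} :
      Set (Polynomial (Polynomial (ZMod (p ^ 2)))))

namespace Paper45




theorem surj_endo_injective {R : Type*} [CommRing R] [IsNoetherianRing R]
    (θ : R →+* R) (hs : Function.Surjective θ) : Function.Injective θ := by
  let hom : ℕ → R →+* R := fun n => Nat.recAux (RingHom.id R) (fun _ h => θ.comp h) n
  have homsucc : ∀ n, hom (n + 1) = θ.comp (hom n) := fun n => rfl
  have hsurj : ∀ n, Function.Surjective (hom n) := by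
    intro n; induction n with
    | zero => exact Function.surjective_id
    | succ n ih => rw [homsucc]; exact hs.comp ih
  have hmono : Monotone fun n => RingHom.ker (hom n) := by
    apply monotone_nat_of_le_succ
    intro n x hx
    rw [RingHom.mem_ker] at hx ⊢
    rw [homsucc, RingHom.comp_apply, hx, map_zero]
  obtain ⟨n, hn⟩ := monotone_stabilizes_iff_noetherian.mpr
      (isNoetherianRing_iff.mp ‹IsNoetherianRing R›)
      ⟨fun n => RingHom.ker (hom n), hmono⟩
  rw [injective_iff_map_eq_zero]
  intro x hx
  obtain ⟨z, rfl⟩ := hsurj n x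
  have hz : z ∈ RingHom.ker (hom (n + 1)) := by
    rw [RingHom.mem_ker, homsucc, RingHom.comp_apply, hx]
  have heq : RingHom.ker (hom n) = RingHom.ker (hom (n + 1)) := hn (n + 1) (Nat.le_succ n)
  rw [← heq] at hz
  exact hz

theorem dvd_of_map_eq_zero (p : ℕ) (hp : p.Prime)
    (f : Polynomial (ZMod (p ^ 2)))
    (h : f.map (ZMod.castHom (dvd_pow_self p (by norm_num : (2:ℕ) ≠ 0)) (ZMod p)) = 0) :
    (p : Polynomial (ZMod (p ^ 2))) ∣ f := by
  haveI : Fact p.Prime := ⟨hp⟩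
  haveI : NeZero (p ^ 2) := ⟨pow_ne_zero 2 hp.ne_zero⟩
  have hcoeff : ∀ k, ∃ b : ZMod (p ^ 2), f.coeff k = (p : ZMod (p ^ 2)) * b := by
    intro k
    have h0 : (ZMod.castHom (dvd_pow_self p (by norm_num : (2:ℕ) ≠ 0)) (ZMod p)) (f.coeff k) = 0 := by
      rw [← coeff_map, h, coeff_zero]
    have h1 : (((f.coeff k).val : ℕ) : ZMod p) = 0 := by
      rwa [ZMod.natCast_val, ← ZMod.castHom_apply (h := dvd_pow_self p (by norm_num : (2:ℕ) ≠ 0))]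
    obtain ⟨m, hm⟩ := (ZMod.natCast_eq_zero_iff _ p).mp h1
    refine ⟨(m : ZMod (p ^ 2)), ?_⟩
    have : f.coeff k = (((f.coeff k).val : ℕ) : ZMod (p ^ 2)) := by
      rw [ZMod.natCast_val, ZMod.cast_id]
    rw [this, hm]; push_cast; ring
  choose b hb using hcoeff
  have : f = ∑ k ∈ f.support, monomial k (f.coeff k) := f.as_sum_support
  rw [this]
  apply Finset.dvd_sum
  intro k _
  refine ⟨monomial k (b k), ?_⟩
  rw [hb k, ← C_mul_monomial, map_natCast]






/-- p² = 0 in the polynomial ring. -/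
theorem p_sq_zero (p : ℕ) :
    (p : Polynomial (ZMod (p ^ 2))) * (p : Polynomial (ZMod (p ^ 2))) = 0 := by
  have : ((p : ℕ) : Polynomial (ZMod (p ^ 2))) * ((p : ℕ) : Polynomial (ZMod (p ^ 2)))
      = ((p ^ 2 : ℕ) : Polynomial (ZMod (p ^ 2))) := by push_cast; ring
  rw [this, ← map_natCast (Polynomial.C : ZMod (p ^ 2) →+* Polynomial (ZMod (p ^ 2))),
    ZMod.natCast_self, map_zero]

/-- inverse mod (p, g) from coprimality mod p. -/
theorem invmod_of_coprime (p : ℕ) (hp : p.Prime) (g w : Polynomial (ZMod (p ^ 2)))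
    (hcop : IsCoprime
      (g.map (ZMod.castHom (dvd_pow_self p (by norm_num : (2:ℕ) ≠ 0)) (ZMod p)))
      (w.map (ZMod.castHom (dvd_pow_self p (by norm_num : (2:ℕ) ≠ 0)) (ZMod p)))) :
    ∃ z, w * z - 1 ∈ Ideal.span
      ({(p : Polynomial (ZMod (p ^ 2))), g} : Set (Polynomial (ZMod (p ^ 2)))) := by
  haveI : Fact p.Prime := ⟨hp⟩
  set φ := ZMod.castHom (dvd_pow_self p (by norm_num : (2:ℕ) ≠ 0)) (ZMod p) with hφ
  obtain ⟨α, β, hαβ⟩ := hcop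
  have hsurj : Function.Surjective (Polynomial.map φ) :=
    Polynomial.map_surjective φ (ZMod.ringHom_surjective φ)
  obtain ⟨A, hA⟩ := hsurj α
  obtain ⟨B, hB⟩ := hsurj β
  have hker : (A * g + B * w - 1).map φ = 0 := by
    rw [Polynomial.map_sub, Polynomial.map_add, Polynomial.map_mul, Polynomial.map_mul,
      hA, hB, Polynomial.map_one, hαβ, sub_self]
  obtain ⟨k, hk⟩ := dvd_of_map_eq_zero p hp _ hker
  refine ⟨B, ?_⟩
  rw [Ideal.mem_span_pair]
  exact ⟨k, -A, by linear_combination -hk⟩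

/-- inverse mod (p, g) for `w` nonzero mod p of degree < deg g. -/
theorem invmod (p : ℕ) (hp : p.Prime) (g w : Polynomial (ZMod (p ^ 2))) (hg : g.Monic)
    (hgirr : Irreducible
      (g.map (ZMod.castHom (dvd_pow_self p (by norm_num : (2:ℕ) ≠ 0)) (ZMod p))))
    (hw : w.map (ZMod.castHom (dvd_pow_self p (by norm_num : (2:ℕ) ≠ 0)) (ZMod p)) ≠ 0)
    (hdeg : w.degree < g.degree) :
    ∃ z, w * z - 1 ∈ Ideal.span
      ({(p : Polynomial (ZMod (p ^ 2))), g} : Set (Polynomial (ZMod (p ^ 2)))) := by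
  haveI : Fact p.Prime := ⟨hp⟩
  set φ' := ZMod.castHom (dvd_pow_self p (by norm_num : (2:ℕ) ≠ 0)) (ZMod p) with hφ'
  have hnd : ¬ (g.map φ' ∣ w.map φ') := by
    intro hdvd
    apply hw
    apply Polynomial.eq_zero_of_dvd_of_degree_lt hdvd
    calc (w.map φ').degree ≤ w.degree := Polynomial.degree_map_le
      _ < g.degree := hdeg
      _ = (g.map φ').degree := (hg.degree_map φ').symm
  exact invmod_of_coprime p hp g w (hgirr.coprime_iff_not_dvd.mpr hnd)

/-- upgrade an inverse mod (p,g) to an inverse mod (p,g²). -/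
theorem invmod_sq (p : ℕ) (g w : Polynomial (ZMod (p ^ 2)))
    (h : ∃ z, w * z - 1 ∈ Ideal.span
      ({(p : Polynomial (ZMod (p ^ 2))), g} : Set (Polynomial (ZMod (p ^ 2))))) :
    ∃ z, w * z - 1 ∈ Ideal.span
      ({(p : Polynomial (ZMod (p ^ 2))), g ^ 2} : Set (Polynomial (ZMod (p ^ 2)))) := by
  obtain ⟨z, hz⟩ := h
  rw [Ideal.mem_span_pair] at hz
  obtain ⟨a, b, hab⟩ := hz
  refine ⟨z * (1 - (w * z - 1)), ?_⟩
  rw [Ideal.mem_span_pair]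
  refine ⟨-2 * a * b * g - a * a * (p : Polynomial (ZMod (p ^ 2))), -(b * b), ?_⟩
  have h2 := p_sq_zero p
  linear_combination (-(a * (p : Polynomial (ZMod (p ^ 2))) + b * g + (w * z - 1))) * hab






theorem surj_hom (p : ℕ) (g u u' U U' v : Polynomial (ZMod (p ^ 2)))
    (hUh : U - v ^ 2 * u ∈ Ideal.span
      ({(p : Polynomial (ZMod (p ^ 2))), g ^ 2} : Set (Polynomial (ZMod (p ^ 2)))))
    (hg' : ∃ z, derivative g * z - 1 ∈ Ideal.span
      ({(p : Polynomial (ZMod (p ^ 2))), g ^ 2} : Set (Polynomial (ZMod (p ^ 2)))))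
    (hU' : ∃ z, U' * z - 1 ∈ Ideal.span
      ({(p : Polynomial (ZMod (p ^ 2))), g} : Set (Polynomial (ZMod (p ^ 2)))))
    (hv : ∃ z, v * z - 1 ∈ Ideal.span
      ({(p : Polynomial (ZMod (p ^ 2))), g ^ 2} : Set (Polynomial (ZMod (p ^ 2))))) :
    ∃ f : (Polynomial (Polynomial (ZMod (p ^ 2))) ⧸ paperIdealI p g U' U) →+*
        (Polynomial (Polynomial (ZMod (p ^ 2))) ⧸ paperIdealI p g u' u),
      Function.Surjective f := by
  classical
  obtain ⟨a, ha⟩ := hg'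
  obtain ⟨zi, hzi⟩ := hU'
  obtain ⟨zv, hzv⟩ := hv
  set I : Ideal (Polynomial (Polynomial (ZMod (p ^ 2)))) := paperIdealI p g u' u with hI
  set mk : Polynomial (Polynomial (ZMod (p ^ 2))) →+*
      (Polynomial (Polynomial (ZMod (p ^ 2))) ⧸ I) := Ideal.Quotient.mk I with hmkdef
  set mkC : Polynomial (ZMod (p ^ 2)) →+*
      (Polynomial (Polynomial (ZMod (p ^ 2))) ⧸ I) :=
    mk.comp (Polynomial.C :
      Polynomial (ZMod (p ^ 2)) →+* Polynomial (Polynomial (ZMod (p ^ 2)))) with hmkC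
  set y : Polynomial (Polynomial (ZMod (p ^ 2))) ⧸ I := mk Polynomial.X with hydef
  have hgen : ∀ W ∈ I, mk W = 0 := fun W hW => Ideal.Quotient.eq_zero_iff_mem.mpr hW
  -- the three defining relations
  have E1 : mkC g = mkC u' * y := by
    have h := hgen (Polynomial.C g - Polynomial.C u' * Polynomial.X)
      (Ideal.subset_span (by left; rfl))
    rw [map_sub, map_mul] at h
    exact sub_eq_zero.mp h
  have E2 : y ^ 2 = (p : Polynomial (Polynomial (ZMod (p ^ 2))) ⧸ I) * mkC u := by
    have h := hgen (Polynomial.X ^ 2 -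
        (p : Polynomial (Polynomial (ZMod (p ^ 2)))) * Polynomial.C u)
      (Ideal.subset_span (by right; left; rfl))
    rw [map_sub, map_pow, map_mul, map_natCast] at h
    exact sub_eq_zero.mp h
  have E3 : (p : Polynomial (Polynomial (ZMod (p ^ 2))) ⧸ I) * y = 0 := by
    have h := hgen ((p : Polynomial (Polynomial (ZMod (p ^ 2)))) * Polynomial.X)
      (Ideal.subset_span (by right; right; rfl))
    rw [map_mul, map_natCast] at h
    exact h
  have hp2Q : (p : Polynomial (Polynomial (ZMod (p ^ 2))) ⧸ I) *
      (p : Polynomial (Polynomial (ZMod (p ^ 2))) ⧸ I) = 0 := by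
    have h := congrArg mkC (p_sq_zero p)
    rw [map_mul, map_natCast, map_zero] at h
    exact h
  have DpG : (p : Polynomial (Polynomial (ZMod (p ^ 2))) ⧸ I) * mkC g = 0 := by
    linear_combination (p : Polynomial (Polynomial (ZMod (p ^ 2))) ⧸ I) * E1 + mkC u' * E3
  have Dggy : mkC g * mkC g * y = 0 := by
    linear_combination (mkC g * y + mkC u' * y ^ 2) * E1 + (mkC u' ^ 2 * y) * E2
      + (mkC u * mkC u' ^ 2) * E3
  have D4 : ∀ f ∈ Ideal.span
      ({(p : Polynomial (ZMod (p ^ 2))), g ^ 2} : Set (Polynomial (ZMod (p ^ 2)))),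
      mkC f * y = 0 := by
    intro f hf
    rw [Ideal.mem_span_pair] at hf
    obtain ⟨aa, bb, habb⟩ := hf
    have hf2 : mkC f = mkC aa * (p : Polynomial (Polynomial (ZMod (p ^ 2))) ⧸ I)
        + mkC bb * mkC g ^ 2 := by
      rw [← habb, map_add, map_mul, map_mul, map_pow, map_natCast]
    rw [hf2]
    linear_combination mkC aa * E3 + mkC bb * Dggy
  have D5 : ∀ f ∈ Ideal.span
      ({(p : Polynomial (ZMod (p ^ 2))), g} : Set (Polynomial (ZMod (p ^ 2)))),
      (p : Polynomial (Polynomial (ZMod (p ^ 2))) ⧸ I) * mkC f = 0 := by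
    intro f hf
    rw [Ideal.mem_span_pair] at hf
    obtain ⟨aa, bb, habb⟩ := hf
    have hf2 : mkC f = mkC aa * (p : Polynomial (Polynomial (ZMod (p ^ 2))) ⧸ I)
        + mkC bb * mkC g := by
      rw [← habb, map_add, map_mul, map_mul, map_natCast]
    rw [hf2]
    linear_combination mkC aa * hp2Q + mkC bb * DpG
  -- choice of s
  set s : Polynomial (ZMod (p ^ 2)) := a * (U' * v - u') with hsdef
  have hA : u' + derivative g * s - U' * v ∈ Ideal.span
      ({(p : Polynomial (ZMod (p ^ 2))), g ^ 2} : Set (Polynomial (ZMod (p ^ 2)))) := by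
    have heq : u' + derivative g * s - U' * v
        = (derivative g * a - 1) * (U' * v - u') := by rw [hsdef]; ring
    rw [heq]
    exact Ideal.mul_mem_right _ _ ha
  -- the inner evaluation
  set f₀ : ZMod (p ^ 2) →+* (Polynomial (Polynomial (ZMod (p ^ 2))) ⧸ I) :=
    mkC.comp (Polynomial.C : ZMod (p ^ 2) →+* Polynomial (ZMod (p ^ 2))) with hf₀
  set ξ : Polynomial (Polynomial (ZMod (p ^ 2))) ⧸ I := mkC Polynomial.X + mkC s * y with hξ
  set inner : Polynomial (ZMod (p ^ 2)) →+*
      (Polynomial (Polynomial (ZMod (p ^ 2))) ⧸ I) := eval₂RingHom f₀ ξ with hinner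
  have hinnerX : inner Polynomial.X = mkC Polynomial.X + mkC s * y := by
    rw [hinner]; simp only [coe_eval₂RingHom, eval₂_X]; rfl
  have hinnerC : ∀ r : ZMod (p ^ 2), inner (Polynomial.C r) = mkC (Polynomial.C r) := by
    intro r; rw [hinner]; simp only [coe_eval₂RingHom, eval₂_C]; rfl
  -- Taylor-expansion lemma
  have F : ∀ w : Polynomial (ZMod (p ^ 2)), ∃ e : Polynomial (ZMod (p ^ 2)),
      inner w = mkC w + mkC (derivative w * s) * y
        + (p : Polynomial (Polynomial (ZMod (p ^ 2))) ⧸ I) * mkC e := by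
    intro w
    induction w using Polynomial.induction_on with
    | C r =>
        refine ⟨0, ?_⟩
        rw [hinnerC r, derivative_C, zero_mul, map_zero]
        ring
    | add w₁ w₂ ih₁ ih₂ =>
        obtain ⟨e₁, he₁⟩ := ih₁
        obtain ⟨e₂, he₂⟩ := ih₂
        refine ⟨e₁ + e₂, ?_⟩
        rw [map_add, he₁, he₂, derivative_add]
        simp only [map_add, add_mul, mul_add]
        ring
    | monomial n r ih =>
        obtain ⟨e, he⟩ := ih
        refine ⟨e * Polynomial.X + derivative (Polynomial.C r * Polynomial.X ^ n) * s * s * u, ?_⟩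
        have hXsucc : (Polynomial.C r * Polynomial.X ^ (n + 1) :
            Polynomial (ZMod (p ^ 2))) = (Polynomial.C r * Polynomial.X ^ n) * Polynomial.X := by
          ring
        rw [hXsucc, map_mul, he, hinnerX]
        have hder : derivative ((Polynomial.C r * Polynomial.X ^ n) * Polynomial.X)
            = derivative (Polynomial.C r * Polynomial.X ^ n) * Polynomial.X
              + Polynomial.C r * Polynomial.X ^ n := by
          rw [derivative_mul, derivative_X, mul_one]
        rw [hder]
        simp only [map_add, map_mul]
        linear_combination (mkC (derivative (Polynomial.C r * Polynomial.X ^ n))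
            * mkC s * mkC s) * E2 + (mkC e * mkC s) * E3
  -- choice of c
  obtain ⟨eg, heg⟩ := F g
  set c : Polynomial (ZMod (p ^ 2)) := zi * (eg - derivative U' * s * v * u) with hcdef
  have hB : eg - U' * c - derivative U' * s * v * u ∈ Ideal.span
      ({(p : Polynomial (ZMod (p ^ 2))), g} : Set (Polynomial (ZMod (p ^ 2)))) := by
    have heq : eg - U' * c - derivative U' * s * v * u
        = -((U' * zi - 1) * (eg - derivative U' * s * v * u)) := by rw [hcdef]; ring
    rw [heq]
    exact neg_mem (Ideal.mul_mem_right _ _ hzi)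
  set η : Polynomial (Polynomial (ZMod (p ^ 2))) ⧸ I :=
    mkC v * y + (p : Polynomial (Polynomial (ZMod (p ^ 2))) ⧸ I) * mkC c with hη
  set Φ : Polynomial (Polynomial (ZMod (p ^ 2))) →+*
      (Polynomial (Polynomial (ZMod (p ^ 2))) ⧸ I) := eval₂RingHom inner η with hΦ
  have hΦC : ∀ w : Polynomial (ZMod (p ^ 2)), Φ (Polynomial.C w) = inner w := by
    intro w; rw [hΦ]; simp only [coe_eval₂RingHom, eval₂_C]
  have hΦX : Φ Polynomial.X = η := by
    rw [hΦ]; simp only [coe_eval₂RingHom, eval₂_X]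
  -- the three generators die
  have K3 : Φ ((p : Polynomial (Polynomial (ZMod (p ^ 2)))) * Polynomial.X) = 0 := by
    rw [map_mul, map_natCast, hΦX, hη]
    linear_combination mkC v * E3 + mkC c * hp2Q
  have hJle : ∀ f ∈ Ideal.span
      ({(p : Polynomial (ZMod (p ^ 2))), g ^ 2} : Set (Polynomial (ZMod (p ^ 2)))),
      f ∈ Ideal.span
      ({(p : Polynomial (ZMod (p ^ 2))), g} : Set (Polynomial (ZMod (p ^ 2)))) := by
    intro f hf
    rw [Ideal.mem_span_pair] at hf ⊢
    obtain ⟨aa, bb, habb⟩ := hf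
    exact ⟨aa, bb * g, by linear_combination habb⟩
  have K2 : Φ (Polynomial.X ^ 2 -
      (p : Polynomial (Polynomial (ZMod (p ^ 2)))) * Polynomial.C U) = 0 := by
    obtain ⟨eU, heU⟩ := F U
    have hK2' : (p : Polynomial (Polynomial (ZMod (p ^ 2))) ⧸ I) * mkC (U - v ^ 2 * u) = 0 :=
      D5 _ (hJle _ hUh)
    rw [map_sub, map_mul, map_pow] at hK2'
    rw [map_sub, map_pow, map_mul, map_natCast, hΦX, hΦC, heU, hη]
    linear_combination (mkC v ^ 2) * E2
      + (2 * mkC v * mkC c - mkC (derivative U * s)) * E3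
      + (mkC c ^ 2 - mkC eU) * hp2Q - hK2'
  have K1 : Φ (Polynomial.C g - Polynomial.C U' * Polynomial.X) = 0 := by
    obtain ⟨eU', heU'⟩ := F U'
    have h1 : mkC (u' + derivative g * s - U' * v) * y = 0 := D4 _ hA
    have h2 : (p : Polynomial (Polynomial (ZMod (p ^ 2))) ⧸ I)
        * mkC (eg - U' * c - derivative U' * s * v * u) = 0 := D5 _ hB
    simp only [map_add, map_sub, map_mul] at h1 h2
    rw [map_sub, map_mul, hΦC, hΦC, hΦX, heg, heU', hη]
    simp only [map_mul]
    linear_combination E1 + h1 + h2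
      - (mkC (derivative U') * mkC s * mkC v) * E2
      - (mkC (derivative U') * mkC s * mkC c + mkC eU' * mkC v) * E3
      - (mkC eU' * mkC c) * hp2Q
  -- surjectivity data
  have hmem : ∀ W, Φ W ∈ Φ.range := fun W => ⟨W, rfl⟩
  have hpw : ∀ w : Polynomial (ZMod (p ^ 2)),
      (p : Polynomial (Polynomial (ZMod (p ^ 2))) ⧸ I) * mkC w ∈ Φ.range := by
    intro w
    obtain ⟨e, he⟩ := F w
    have hkey : (p : Polynomial (Polynomial (ZMod (p ^ 2))) ⧸ I) * mkC w
        = Φ ((p : Polynomial (Polynomial (ZMod (p ^ 2)))) * Polynomial.C w) := by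
      rw [map_mul, map_natCast, hΦC, he]
      linear_combination -(mkC (derivative w * s)) * E3 - mkC e * hp2Q
    rw [hkey]; exact hmem _
  have hvy : mkC v * y ∈ Φ.range := by
    have hkey : mkC v * y = Φ Polynomial.X
        - (p : Polynomial (Polynomial (ZMod (p ^ 2))) ⧸ I) * mkC c := by
      rw [hΦX, hη]; ring
    rw [hkey]; exact sub_mem (hmem _) (hpw c)
  have hyS : y ∈ Φ.range := by
    obtain ⟨e, he⟩ := F zv
    have h1 : mkC (v * zv - 1) * y = 0 := D4 _ hzv
    simp only [map_sub, map_mul, map_one] at h1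
    have hkey : y = Φ (Polynomial.C zv) * (mkC v * y)
        - (p : Polynomial (Polynomial (ZMod (p ^ 2))) ⧸ I)
          * mkC (derivative zv * s * v * u) := by
      rw [hΦC, he]
      simp only [map_mul]
      linear_combination -h1 - (mkC (derivative zv) * mkC s * mkC v) * E2
        - (mkC e * mkC v) * E3
    rw [hkey]; exact sub_mem (mul_mem (hmem _) hvy) (hpw _)
  have hwy : ∀ w : Polynomial (ZMod (p ^ 2)), mkC w * y ∈ Φ.range := by
    intro w
    obtain ⟨e, he⟩ := F w
    have hkey : mkC w * y = Φ (Polynomial.C w) * y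
        - (p : Polynomial (Polynomial (ZMod (p ^ 2))) ⧸ I)
          * mkC (derivative w * s * u) := by
      rw [hΦC, he]
      simp only [map_mul]
      linear_combination -(mkC (derivative w) * mkC s) * E2 - mkC e * E3
    rw [hkey]; exact sub_mem (mul_mem (hmem _) hyS) (hpw _)
  have hxS : mkC Polynomial.X ∈ Φ.range := by
    have hkey : mkC Polynomial.X = Φ (Polynomial.C Polynomial.X) - mkC s * y := by
      rw [hΦC, hinnerX]; ring
    rw [hkey]; exact sub_mem (hmem _) (hwy s)
  have hCS : ∀ w : Polynomial (ZMod (p ^ 2)), mkC w ∈ Φ.range := by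
    intro w
    induction w using Polynomial.induction_on' with
    | add w₁ w₂ ih₁ ih₂ => rw [map_add]; exact add_mem ih₁ ih₂
    | monomial n r =>
        rw [← Polynomial.C_mul_X_pow_eq_monomial, map_mul, map_pow]
        refine mul_mem ?_ (pow_mem hxS n)
        have : mkC (Polynomial.C r) = Φ (Polynomial.C (Polynomial.C r)) := by
          rw [hΦC, hinnerC]
        rw [this]; exact hmem _
  have hallS : ∀ W : Polynomial (Polynomial (ZMod (p ^ 2))), mk W ∈ Φ.range := by
    intro W
    induction W using Polynomial.induction_on' with
    | add W₁ W₂ ih₁ ih₂ => rw [map_add]; exact add_mem ih₁ ih₂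
    | monomial n w =>
        rw [← Polynomial.C_mul_X_pow_eq_monomial, map_mul, map_pow]
        exact mul_mem (hCS w) (pow_mem hyS n)
  have hkerI : ∀ W ∈ paperIdealI p g U' U, Φ W = 0 := by
    have hle : paperIdealI p g U' U ≤ RingHom.ker Φ := by
      rw [paperIdealI]
      rw [Ideal.span_le]
      rintro x hx
      simp only [Set.mem_insert_iff, Set.mem_singleton_iff] at hx
      rcases hx with rfl | rfl | rfl
      · exact RingHom.mem_ker.mpr K1
      · exact RingHom.mem_ker.mpr K2
      · exact RingHom.mem_ker.mpr K3
    exact fun W hW => RingHom.mem_ker.mp (hle hW)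
  refine ⟨Ideal.Quotient.lift _ Φ hkerI, ?_⟩
  intro q
  obtain ⟨W, rfl⟩ := Ideal.Quotient.mk_surjective (I := I) q
  obtain ⟨V, hV⟩ := RingHom.mem_range.mp (hallS W)
  refine ⟨Ideal.Quotient.mk _ V, ?_⟩
  rw [Ideal.Quotient.lift_mk]
  exact hV

end Paper45

/-- Proposition 4.5 (2): with a common `g`, if there are `v₁(X), v₂(X) ∈ ℤ_{p²}[X]` with
`u₂ ≡ v₂²·u₁`, `u₄ ≡ v₂·u₃`, `u₁ ≡ v₁²·u₂` and `u₃ ≡ v₁·u₄` modulo the ideal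
`(p, g(X)²)`, then `R₁ = ℤ_{p²}[X,Y]/(g − u₃Y, Y² − p·u₁, pY)` and
`R₂ = ℤ_{p²}[X,Y]/(g − u₄Y, Y² − p·u₂, pY)` are isomorphic rings. -/
theorem paperRingR_iso_of_mixed_relation
    (p : ℕ) (hp : p.Prime)
    (g u₁ u₂ u₃ u₄ : Polynomial (ZMod (p ^ 2)))
    (hgcoeff : ∀ k, (g.coeff k).val < p)
    (hu₁coeff : ∀ k, (u₁.coeff k).val < p) (hu₂coeff : ∀ k, (u₂.coeff k).val < p)
    (hu₃coeff : ∀ k, (u₃.coeff k).val < p) (hu₄coeff : ∀ k, (u₄.coeff k).val < p)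
    (hg : g.Monic)
    (hgirr : Irreducible
      (g.map (ZMod.castHom (dvd_pow_self p (by norm_num : (2:ℕ) ≠ 0)) (ZMod p))))
    (hu₁ : u₁.map (ZMod.castHom (dvd_pow_self p (by norm_num : (2:ℕ) ≠ 0)) (ZMod p)) ≠ 0)
    (hu₂ : u₂.map (ZMod.castHom (dvd_pow_self p (by norm_num : (2:ℕ) ≠ 0)) (ZMod p)) ≠ 0)
    (hu₃ : u₃.map (ZMod.castHom (dvd_pow_self p (by norm_num : (2:ℕ) ≠ 0)) (ZMod p)) ≠ 0)
    (hu₄ : u₄.map (ZMod.castHom (dvd_pow_self p (by norm_num : (2:ℕ) ≠ 0)) (ZMod p)) ≠ 0)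
    (hu₁deg : u₁.degree < g.degree) (hu₂deg : u₂.degree < g.degree)
    (hu₃deg : u₃.degree < g.degree) (hu₄deg : u₄.degree < g.degree)
    (v₁ v₂ : Polynomial (ZMod (p ^ 2)))
    (h₁ : u₂ - v₂ ^ 2 * u₁ ∈
      Ideal.span ({(p : Polynomial (ZMod (p ^ 2))), g ^ 2} : Set (Polynomial (ZMod (p ^ 2)))))
    (h₂ : u₄ - v₂ * u₃ ∈
      Ideal.span ({(p : Polynomial (ZMod (p ^ 2))), g ^ 2} : Set (Polynomial (ZMod (p ^ 2)))))
    (h₃ : u₁ - v₁ ^ 2 * u₂ ∈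
      Ideal.span ({(p : Polynomial (ZMod (p ^ 2))), g ^ 2} : Set (Polynomial (ZMod (p ^ 2)))))
    (h₄ : u₃ - v₁ * u₄ ∈
      Ideal.span ({(p : Polynomial (ZMod (p ^ 2))), g ^ 2} : Set (Polynomial (ZMod (p ^ 2))))) :
    Nonempty
      ((Polynomial (Polynomial (ZMod (p ^ 2))) ⧸ paperIdealI p g u₃ u₁) ≃+*
        (Polynomial (Polynomial (ZMod (p ^ 2))) ⧸ paperIdealI p g u₄ u₂)) := by
  haveI : Fact p.Prime := ⟨hp⟩
  haveI : NeZero (p ^ 2) := ⟨pow_ne_zero 2 hp.ne_zero⟩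
  set φ := ZMod.castHom (dvd_pow_self p (by norm_num : (2:ℕ) ≠ 0)) (ZMod p) with hφ
  -- inverse of the derivative of g mod (p, g²)
  have hgsep : (g.map φ).Separable := PerfectField.separable_of_irreducible hgirr
  have hgcop : IsCoprime (g.map φ) ((derivative g).map φ) := by
    have := hgsep
    rw [Polynomial.Separable, Polynomial.derivative_map] at this
    exact this
  have hg' : ∃ z, derivative g * z - 1 ∈ Ideal.span
      ({(p : Polynomial (ZMod (p ^ 2))), g ^ 2} : Set (Polynomial (ZMod (p ^ 2)))) :=
    Paper45.invmod_sq p g _ (Paper45.invmod_of_coprime p hp g (derivative g) hgcop)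
  -- inverses of u₃, u₄ mod (p, g)
  have hu₃inv := Paper45.invmod p hp g u₃ hg hgirr hu₃ hu₃deg
  have hu₄inv := Paper45.invmod p hp g u₄ hg hgirr hu₄ hu₄deg
  -- inverse of u₁ mod (p, g²), and invertibility of v₁, v₂ mod (p, g²)
  obtain ⟨z1, hz1⟩ := Paper45.invmod_sq p g u₁ (Paper45.invmod p hp g u₁ hg hgirr hu₁ hu₁deg)
  have h5 : u₁ * (1 - (v₁ * v₂) ^ 2) ∈ Ideal.span
      ({(p : Polynomial (ZMod (p ^ 2))), g ^ 2} : Set (Polynomial (ZMod (p ^ 2)))) := by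
    have heq : u₁ * (1 - (v₁ * v₂) ^ 2) = (u₁ - v₁ ^ 2 * u₂) + v₁ ^ 2 * (u₂ - v₂ ^ 2 * u₁) := by
      ring
    rw [heq]
    exact add_mem h₃ (Ideal.mul_mem_left _ _ h₁)
  have h6 : 1 - (v₁ * v₂) ^ 2 ∈ Ideal.span
      ({(p : Polynomial (ZMod (p ^ 2))), g ^ 2} : Set (Polynomial (ZMod (p ^ 2)))) := by
    have heq : 1 - (v₁ * v₂) ^ 2 = z1 * (u₁ * (1 - (v₁ * v₂) ^ 2))
        - (u₁ * z1 - 1) * (1 - (v₁ * v₂) ^ 2) := by ring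
    rw [heq]
    exact sub_mem (Ideal.mul_mem_left _ _ h5) (Ideal.mul_mem_right _ _ hz1)
  have hv₂ : ∃ z, v₂ * z - 1 ∈ Ideal.span
      ({(p : Polynomial (ZMod (p ^ 2))), g ^ 2} : Set (Polynomial (ZMod (p ^ 2)))) := by
    refine ⟨v₂ * v₁ ^ 2, ?_⟩
    have heq : v₂ * (v₂ * v₁ ^ 2) - 1 = -(1 - (v₁ * v₂) ^ 2) := by ring
    rw [heq]; exact neg_mem h6
  have hv₁ : ∃ z, v₁ * z - 1 ∈ Ideal.span
      ({(p : Polynomial (ZMod (p ^ 2))), g ^ 2} : Set (Polynomial (ZMod (p ^ 2)))) := by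
    refine ⟨v₁ * v₂ ^ 2, ?_⟩
    have heq : v₁ * (v₁ * v₂ ^ 2) - 1 = -(1 - (v₁ * v₂) ^ 2) := by ring
    rw [heq]; exact neg_mem h6
  -- the two surjections
  obtain ⟨Φ, hΦ⟩ := Paper45.surj_hom p g u₁ u₃ u₂ u₄ v₂ h₁ hg' hu₄inv hv₂
  obtain ⟨Ψ, hΨ⟩ := Paper45.surj_hom p g u₂ u₄ u₁ u₃ v₁ h₃ hg' hu₃inv hv₁
  -- Noetherianity
  haveI : IsNoetherianRing (ZMod (p ^ 2)) := isNoetherian_of_finite _ _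
  haveI : IsNoetherianRing (Polynomial (ZMod (p ^ 2))) := Polynomial.isNoetherianRing
  haveI : IsNoetherianRing (Polynomial (Polynomial (ZMod (p ^ 2)))) := Polynomial.isNoetherianRing
  haveI : IsNoetherianRing
      (Polynomial (Polynomial (ZMod (p ^ 2))) ⧸ paperIdealI p g u₃ u₁) := inferInstance
  -- Φ ∘ Ψ is a surjective endomorphism of a Noetherian ring, hence injective
  have hθ : Function.Surjective (Φ.comp Ψ) := by
    rw [RingHom.coe_comp]
    exact hΦ.comp hΨ
  have hθinj : Function.Injective (Φ.comp Ψ) := Paper45.surj_endo_injective (R := (Polynomial (Polynomial (ZMod (p ^ 2))) ⧸ paperIdealI p g u₃ u₁)) _ hθ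
  rw [RingHom.coe_comp] at hθinj
  have hΨinj : Function.Injective Ψ := Function.Injective.of_comp hθinj
  exact ⟨RingEquiv.ofBijective Ψ ⟨hΨinj, hΨ⟩⟩
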